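/- Let i, j ∈ ℕ with j ≤ i and set (r, r′) = (−ρ−i, −ρ′−j) (so (r, r′) ∈ L_even ∪ L_odd). Then the ℂ-vector space of diagonal sequences for (r, r′) is two-dimensional, and it has a basis s′, s″ such that s′(α) ≠ 0 for all α ≤ j, s′(α) = 0 for all α > j, s″(α) = 0 for all α ≤ i, and s″(α) ≠ 0 for all α > i. -/

import Mathlib

noncomputable section

/-- ρ = (n-1)/2 as a complex number. -/
def rho (n : ℕ) : ℂ := ((n : ℂ) - 1) / 2

/-- ρ' = (n-2)/2 as a complex number. -/
def rho' (n : ℕ) : ℂ := ((n : ℂ) - 2) / 2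

/-- A diagonal sequence for `(r, r')`:
`(2r'+2α+n−2)·s(α) = (2r+2α+n−1)·s(α+1)` for all `α ∈ ℕ`. -/
def IsDiagSeq (n : ℕ) (r r' : ℂ) (s : ℕ → ℂ) : Prop :=
  ∀ α : ℕ, (2*r' + 2*(α : ℂ) + (n : ℂ) - 2) * s α
    = (2*r + 2*(α : ℂ) + (n : ℂ) - 1) * s (α + 1)

/-- The ℂ-vector space of diagonal sequences for `(r, r')`. -/
def diagSub (n : ℕ) (r r' : ℂ) : Submodule ℂ (ℕ → ℂ) where
  carrier := {s | IsDiagSeq n r r' s}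
  add_mem' := by
    intro a b ha hb α
    simp only [Pi.add_apply]
    linear_combination ha α + hb α
  zero_mem' := by
    intro α
    simp
  smul_mem' := by
    intro c s hs α
    simp only [Pi.smul_apply, smul_eq_mul]
    linear_combination c * hs α

/-- first basis sequence -/
def fseq (i j : ℕ) : ℕ → ℂ
  | 0 => 1
  | α + 1 => if j ≤ α then 0 else (((α : ℂ) - j) / ((α : ℂ) - i)) * fseq i j α

/-- second basis sequence -/
def gseq (i j : ℕ) : ℕ → ℂ
  | 0 => 0
  | α + 1 => if α < i then 0 else if α = i then 1
      else (((α : ℂ) - j) / ((α : ℂ) - i)) * gseq i j α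

lemma cast_sub_ne {a b : ℕ} (h : a ≠ b) : (a : ℂ) - (b : ℂ) ≠ 0 :=
  sub_ne_zero.mpr (by exact_mod_cast h)

lemma fseq_ne_zero {i j : ℕ} (hji : j ≤ i) : ∀ α ≤ j, fseq i j α ≠ 0 := by
  intro α
  induction α with
  | zero => intro _; simp [fseq]
  | succ α ih =>
    intro hαj
    have hα : α < j := hαj
    rw [fseq, if_neg (by omega)]
    exact mul_ne_zero (div_ne_zero (cast_sub_ne (by omega)) (cast_sub_ne (by omega)))
      (ih (by omega))

lemma fseq_eq_zero {i j : ℕ} : ∀ α, j < α → fseq i j α = 0 := by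
  intro α
  induction α with
  | zero => omega
  | succ α _ =>
    intro h
    rw [fseq, if_pos (by omega)]

lemma gseq_eq_zero {i j : ℕ} : ∀ α ≤ i, gseq i j α = 0 := by
  intro α
  induction α with
  | zero => intro _; simp [gseq]
  | succ α _ =>
    intro h
    rw [gseq, if_pos (by omega)]

lemma gseq_ne_zero {i j : ℕ} (hji : j ≤ i) : ∀ α, i < α → gseq i j α ≠ 0 := by
  intro α
  induction α with
  | zero => omega
  | succ α ih =>
    intro h
    rcases eq_or_lt_of_le (Nat.lt_succ_iff.mp h) with heq | hlt
    · rw [gseq, if_neg (by omega), if_pos heq.symm]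
      exact one_ne_zero
    · rw [gseq, if_neg (by omega), if_neg (by omega)]
      exact mul_ne_zero (div_ne_zero (cast_sub_ne (by omega)) (cast_sub_ne (by omega)))
        (ih hlt)

lemma fseq_diag {i j : ℕ} (hji : j ≤ i) :
    ∀ α : ℕ, ((α : ℂ) - j) * fseq i j α = ((α : ℂ) - i) * fseq i j (α + 1) := by
  intro α
  by_cases hα : j ≤ α
  · rw [fseq, if_pos hα, mul_zero]
    rcases eq_or_lt_of_le hα with heq | hlt
    · rw [← heq, sub_self, zero_mul]
    · rw [fseq_eq_zero α hlt, mul_zero]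
  · rw [fseq, if_neg hα]
    have : (α : ℂ) - i ≠ 0 := cast_sub_ne (by omega)
    field_simp

lemma gseq_diag {i j : ℕ} (hji : j ≤ i) :
    ∀ α : ℕ, ((α : ℂ) - j) * gseq i j α = ((α : ℂ) - i) * gseq i j (α + 1) := by
  intro α
  rcases lt_trichotomy α i with h | h | h
  · rw [gseq, if_pos h, gseq_eq_zero α (by omega), mul_zero, mul_zero]
  · subst h
    rw [gseq, if_neg (by omega), if_pos rfl, gseq_eq_zero α le_rfl, mul_zero, sub_self,
      zero_mul]
  · rw [gseq, if_neg (by omega), if_neg (by omega)]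
    have : (α : ℂ) - i ≠ 0 := cast_sub_ne (by omega)
    field_simp

theorem statement1 (n : ℕ) (hn : 3 ≤ n) (i j : ℕ) (hji : j ≤ i) (r r' : ℂ)
    (hr : r = -rho n - (i : ℂ)) (hr' : r' = -rho' n - (j : ℂ)) :
    Module.finrank ℂ (diagSub n r r') = 2 ∧
    ∃ s' s'' : ℕ → ℂ, IsDiagSeq n r r' s' ∧ IsDiagSeq n r r' s'' ∧
      -- s', s'' form a basis: they are linearly independent and span
      (∀ c d : ℂ, c • s' + d • s'' = 0 → c = 0 ∧ d = 0) ∧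
      (∀ s : ℕ → ℂ, IsDiagSeq n r r' s → ∃ c d : ℂ, s = c • s' + d • s'') ∧
      (∀ α ≤ j, s' α ≠ 0) ∧ (∀ α, j < α → s' α = 0) ∧
      (∀ α ≤ i, s'' α = 0) ∧ (∀ α, i < α → s'' α ≠ 0) := by
  subst hr hr'
  -- reformulate the diagonal condition
  have key : ∀ s : ℕ → ℂ, IsDiagSeq n (-rho n - i) (-rho' n - j) s ↔
      ∀ α : ℕ, ((α : ℂ) - j) * s α = ((α : ℂ) - i) * s (α + 1) := by
    intro s
    constructor
    · intro h α
      have := h α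
      unfold rho rho' at this
      linear_combination this / 2
    · intro h α
      unfold rho rho'
      linear_combination 2 * h α
  have hf : IsDiagSeq n (-rho n - i) (-rho' n - j) (fseq i j) :=
    (key _).mpr (fseq_diag hji)
  have hg : IsDiagSeq n (-rho n - i) (-rho' n - j) (gseq i j) :=
    (key _).mpr (gseq_diag hji)
  -- uniqueness
  have uniq : ∀ s : ℕ → ℂ, (∀ α : ℕ, ((α : ℂ) - j) * s α = ((α : ℂ) - i) * s (α + 1)) →
      s 0 = 0 → s (i + 1) = 0 → ∀ α, s α = 0 := by
    intro s hs h0 h1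
    have low : ∀ α ≤ i, s α = 0 := by
      intro α
      induction α with
      | zero => intro _; exact h0
      | succ α ih =>
        intro hαi
        have hne : (α : ℂ) - i ≠ 0 := cast_sub_ne (by omega)
        have := hs α
        rw [ih (by omega), mul_zero] at this
        exact (mul_eq_zero.mp this.symm).resolve_left hne
    have high : ∀ β : ℕ, s (i + 1 + β) = 0 := by
      intro β
      induction β with
      | zero => exact h1
      | succ β ih =>
        have hne : ((i + 1 + β : ℕ) : ℂ) - i ≠ 0 := cast_sub_ne (by omega)
        have := hs (i + 1 + β)
        rw [ih, mul_zero] at this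
        have h2 := (mul_eq_zero.mp this.symm).resolve_left hne
        have : i + 1 + β + 1 = i + 1 + (β + 1) := by omega
        rwa [this] at h2
    intro α
    rcases le_or_gt α i with h | h
    · exact low α h
    · obtain ⟨β, rfl⟩ : ∃ β, α = i + 1 + β := ⟨α - (i + 1), by omega⟩
      exact high β
  have hf0 : fseq i j 0 = 1 := rfl
  have hg0 : gseq i j 0 = 0 := rfl
  have hfi1 : fseq i j (i + 1) = 0 := fseq_eq_zero _ (by omega)
  have hgi1 : gseq i j (i + 1) = 1 := by
    rw [gseq, if_neg (by omega), if_pos rfl]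
  -- spanning
  have span : ∀ s : ℕ → ℂ, IsDiagSeq n (-rho n - i) (-rho' n - j) s →
      s = s 0 • fseq i j + s (i + 1) • gseq i j := by
    intro s hs
    have hs' := (key s).mp hs
    have ht : ∀ α : ℕ, ((α : ℂ) - j) * (s α - s 0 * fseq i j α - s (i + 1) * gseq i j α)
        = ((α : ℂ) - i) * (s (α + 1) - s 0 * fseq i j (α + 1)
          - s (i + 1) * gseq i j (α + 1)) := by
      intro α
      linear_combination hs' α - s 0 * fseq_diag hji α - s (i + 1) * gseq_diag hji α
    have := uniq (fun α => s α - s 0 * fseq i j α - s (i + 1) * gseq i j α) ht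
      (by simp [hf0, hg0]) (by simp [hfi1, hgi1])
    funext α
    have hα := this α
    simp only [Pi.add_apply, Pi.smul_apply, smul_eq_mul]
    linear_combination hα
  refine ⟨?_, fseq i j, gseq i j, hf, hg, ?_, ?_, fseq_ne_zero hji, fseq_eq_zero,
    gseq_eq_zero, gseq_ne_zero hji⟩
  · -- finrank = 2
    let L : diagSub n (-rho n - i) (-rho' n - j) →ₗ[ℂ] ℂ × ℂ :=
      { toFun := fun s => (s.1 0, s.1 (i + 1))
        map_add' := fun a b => rfl
        map_smul' := fun c a => rfl }
    have hbij : Function.Bijective L := by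
      constructor
      · intro a b hab
        have h0 : a.1 0 = b.1 0 := congrArg Prod.fst hab
        have h1 : a.1 (i + 1) = b.1 (i + 1) := congrArg Prod.snd hab
        have ha := span a.1 a.2
        have hb := span b.1 b.2
        rw [h0, h1] at ha
        exact Subtype.ext (ha.trans hb.symm)
      · rintro ⟨c, d⟩
        refine ⟨⟨c • fseq i j + d • gseq i j, ?_⟩, ?_⟩
        · exact (diagSub n (-rho n - i) (-rho' n - j)).add_mem
            ((diagSub n (-rho n - i) (-rho' n - j)).smul_mem c hf)
            ((diagSub n (-rho n - i) (-rho' n - j)).smul_mem d hg)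
        · ext
          · simp [L, hf0, hg0]
          · simp [L, hfi1, hgi1]
    have := LinearEquiv.finrank_eq (LinearEquiv.ofBijective L hbij)
    rw [this]
    simp [Module.finrank_prod]
  · -- linear independence
    intro c d h
    have h0 := congrFun h 0
    have h1 := congrFun h (i + 1)
    simp only [Pi.add_apply, Pi.smul_apply, Pi.zero_apply, smul_eq_mul,
      hf0, hg0, hfi1, hgi1] at h0 h1
    refine ⟨by linear_combination h0, by linear_combination h1⟩
  · -- spanning restated
    intro s hs
    exact ⟨s 0, s (i + 1), span s hs⟩

end
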